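/- Assume (EA). If u_1 ∈ T satisfies 𝒫_qsym(u_1) = 0, then 𝒫_qsym(u_1 ⊗ u) = 0 for all u ∈ T. -/

import Mathlib

/- Setting (common to all statements):
`V` is the complex vector space with basis `X_1, …, X_N`, `T = T(V)` the tensor algebra,
realized concretely as the algebra of the free monoid of words in the letters `Fin N`;
the homogeneous component `T^n` is the span of the words of length `n`.
For `j < i` we are given nonzero scalars `b i j` and elements `p i j` in the span of the
`X_k ⊗ X_l` with `k, l ≤ i - 1`; `I_R` is the two-sided ideal generated by the elements
`X_i ⊗ X_j − b_{ij} X_j ⊗ X_i − p_{ij}`, and `𝒜 = T/I_R`. -/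

open scoped BigOperators

noncomputable section

namespace QDiff

/-- Words in the letters `X_1, …, X_N` (indexed by `Fin N`). -/
abbrev Word (N : ℕ) := FreeMonoid (Fin N)

/-- The tensor algebra `T(V)` over the `N`-dimensional space `V` with basis `X_1,…,X_N`,
realized concretely as the monoid algebra on words. -/
abbrev T (N : ℕ) := MonoidAlgebra ℂ (Word N)

variable {N : ℕ}

/-- The basis vector `X_i` of `V ⊆ T(V)`. -/
def X (i : Fin N) : T N := MonoidAlgebra.single (FreeMonoid.of i) 1

/-- The monomial of `T(V)` associated to a word. -/
def mono (w : Word N) : T N := MonoidAlgebra.single w 1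

/-- Length (tensor degree) of a word. -/
def wlen (w : Word N) : ℕ := (FreeMonoid.toList w).length

/-- `cnt w k`: the number of occurrences of the letter `X_k` in the word `w`;
so `fun k => cnt w k` is `ℓ(w)`. -/
def cnt (w : Word N) (k : Fin N) : ℕ := (FreeMonoid.toList w).count k

/-- `w' <_l w`: at the smallest index at which `ℓ(w')` and `ℓ(w)` differ,
the entry of `ℓ(w')` is strictly greater than that of `ℓ(w)`. -/
def lexLt (w' w : Word N) : Prop :=
  ∃ k : Fin N, (∀ j : Fin N, j < k → cnt w' j = cnt w j) ∧ cnt w k < cnt w' k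

/-- `w' ≤_l w`. -/
def lexLe (w' w : Word N) : Prop := (∀ k : Fin N, cnt w' k = cnt w k) ∨ lexLt w' w

/-- The homogeneous component `T^n` of the tensor algebra. -/
def Tdeg (N n : ℕ) : Submodule ℂ (T N) :=
  Submodule.span ℂ {x : T N | ∃ w : Word N, wlen w = n ∧ x = mono w}

variable (b : Fin N → Fin N → ℂ) (p : Fin N → Fin N → T N)

/-- The scalars `b i j` (for `j < i`) are nonzero. -/
def GoodB : Prop := ∀ i j : Fin N, j < i → b i j ≠ 0

/-- Each `p i j` (for `j < i`) lies in the span of the monomials `X_k ⊗ X_l`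
with `k, l ≤ i - 1`. -/
def GoodP : Prop := ∀ i j : Fin N, j < i →
  p i j ∈ Submodule.span ℂ {x : T N | ∃ k l : Fin N, k < i ∧ l < i ∧ x = X k * X l}

/-- The generator `X_i ⊗ X_j − b_{ij} X_j ⊗ X_i − p_{ij}` of the ideal of relations. -/
def relGen (i j : Fin N) : T N := X i * X j - b i j • (X j * X i) - p i j

/-- The two-sided ideal `I_R` of relations (as a `ℂ`-submodule it is the span of the
elements `a ⬝ relGen i j ⬝ c`). -/
def IR : Submodule ℂ (T N) :=
  Submodule.span ℂ
    {x : T N | ∃ (i j : Fin N) (a c : T N), j < i ∧ x = a * relGen b p i j * c}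

/-- Condition (EA): every `u ∈ I_R` lies in the span of the elements
`a ⊗ (X_i ⊗ X_j − b_{ij} X_j ⊗ X_i − p_{ij}) ⊗ c`, where `j < i` and `a, c` are monomials
of `T` such that the monomial `a ⊗ X_i ⊗ X_j ⊗ c` is `≤_l` every monomial occurring in `u`. -/
def EA : Prop :=
  ∀ u ∈ IR b p, u ∈ Submodule.span ℂ
    {x : T N | ∃ (i j : Fin N) (a c : Word N), j < i ∧
      x = mono a * relGen b p i j * mono c ∧
      ∀ w ∈ (MonoidAlgebra.coeff u : Word N →₀ ℂ).support,
        lexLe (a * (FreeMonoid.of i * FreeMonoid.of j) * c) w}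

/-- The map `S : V ⊗ V → V ⊗ V` on pairs of basis vectors. -/
def Sact (x y : Fin N) : T N :=
  if y < x then b x y • (X y * X x) + p x y
  else if x < y then (b y x)⁻¹ • (X y * X x - p y x)
  else X x * X y

/-- The map `S̄ : V ⊗ V → V ⊗ V` on pairs of basis vectors. -/
def SbarAct (x y : Fin N) : T N :=
  if y < x then b x y • (X y * X x)
  else if x < y then (b y x)⁻¹ • (X y * X x)
  else X x * X y

/-- Extend a function on words to a linear endomorphism of `T(V)`. -/
def liftWord (f : Word N → T N) : T N →ₗ[ℂ] T N :=
  (Finsupp.lsum ℂ (fun w => LinearMap.toSpanSingleton ℂ (T N) (f w))).comp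
    (MonoidAlgebra.coeffLinearEquiv ℂ).toLinearMap

/-- The action of the paper's `σ_{k+1}` (acting on the tensor factors in 0-indexed
positions `k, k+1`) on a word; identity on words that are too short. -/
def sigmaWord (k : ℕ) (w : Word N) : T N :=
  if h : k + 2 ≤ (FreeMonoid.toList w).length then
    mono (FreeMonoid.ofList ((FreeMonoid.toList w).take k)) *
      Sact b p ((FreeMonoid.toList w).get ⟨k, by omega⟩)
        ((FreeMonoid.toList w).get ⟨k + 1, by omega⟩) *
      mono (FreeMonoid.ofList ((FreeMonoid.toList w).drop (k + 2)))
  else mono w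

/-- The paper's operator `σ_{k+1}`: it acts as `S` on the tensor factors in 0-indexed
positions `k, k+1` and as the identity on all other factors. -/
def sigma (k : ℕ) : T N →ₗ[ℂ] T N := liftWord (sigmaWord b p k)

/-- The action of the paper's `σ̄_{k+1}` on a word. -/
def sigmabarWord (k : ℕ) (w : Word N) : T N :=
  if h : k + 2 ≤ (FreeMonoid.toList w).length then
    mono (FreeMonoid.ofList ((FreeMonoid.toList w).take k)) *
      SbarAct b ((FreeMonoid.toList w).get ⟨k, by omega⟩)
        ((FreeMonoid.toList w).get ⟨k + 1, by omega⟩) *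
      mono (FreeMonoid.ofList ((FreeMonoid.toList w).drop (k + 2)))
  else mono w

/-- The paper's operator `σ̄_{k+1}`: it acts as `S̄` on the tensor factors in 0-indexed
positions `k, k+1` and as the identity on all other factors. -/
def sigmabar (k : ℕ) : T N →ₗ[ℂ] T N := liftWord (sigmabarWord b k)

/-- The scalar by which `S̄` twists the (ordered) pair `(x, y)`. -/
def betaC (x y : Fin N) : ℂ := if y < x then b x y else if x < y then (b y x)⁻¹ else 1

/-- The coefficient of the quasi-permutation action of `σ ∈ S_n` on the word
`X_{f 0} ⊗ ⋯ ⊗ X_{f (n-1)}`: the product of `β` over the inversions of `σ`. -/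
def permCoeff {n : ℕ} (σ : Equiv.Perm (Fin n)) (f : Fin n → Fin N) : ℂ :=
  ∏ q ∈ Finset.univ.filter (fun q : Fin n × Fin n => q.1 < q.2 ∧ σ q.2 < σ q.1),
    betaC b (f q.1) (f q.2)

/-- The quasi-permutation action of `σ ∈ S_n` on a word
(identity on words of length `≠ n`). -/
def permWordFun {n : ℕ} (σ : Equiv.Perm (Fin n)) (w : Word N) : T N :=
  if h : (FreeMonoid.toList w).length = n then
    permCoeff b σ (fun j => (FreeMonoid.toList w).get (Fin.cast h.symm j)) •
      mono (FreeMonoid.ofList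
        (List.ofFn fun j => (FreeMonoid.toList w).get (Fin.cast h.symm (σ⁻¹ j))))
  else mono w

/-- The operator `σ̄` on `T^n` for an arbitrary permutation `σ ∈ S_n`
(the quasi-permutation representation). -/
def sigmabarPerm {n : ℕ} (σ : Equiv.Perm (Fin n)) : T N →ₗ[ℂ] T N :=
  liftWord (permWordFun b σ)

/-- The quasi-symmetrization operator `P_quasisym = (1/n!) ∑_{σ ∈ S_n} σ̄` on `T^n`. -/
def Pquasisym (n : ℕ) : T N →ₗ[ℂ] T N :=
  (n.factorial : ℂ)⁻¹ • ∑ σ : Equiv.Perm (Fin n), sigmabarPerm b σ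

/-- The adjacent transposition `s_{k+1} = (k, k+1)` (0-indexed) in `S_n`. -/
def swapAdj (n : ℕ) (k : {k : ℕ // k + 2 ≤ n}) : Equiv.Perm (Fin n) :=
  Equiv.swap ⟨k.1, by omega⟩ ⟨k.1 + 1, by omega⟩

/-- A choice, for each `σ ∈ S_n`, of a list of adjacent transpositions. -/
def DecompChoice (n : ℕ) := Equiv.Perm (Fin n) → List {k : ℕ // k + 2 ≤ n}

/-- The chosen lists really are decompositions: `σ = s_{i_1} ⋯ s_{i_r}`. -/
def ValidDecomp {n : ℕ} (D : DecompChoice n) : Prop :=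
  ∀ σ : Equiv.Perm (Fin n), ((D σ).map (swapAdj n)).prod = σ

/-- `σ̂ = σ_{i_1} ⋯ σ_{i_r}` for the chosen decomposition `σ = s_{i_1} ⋯ s_{i_r}`. -/
def Phat {n : ℕ} (D : DecompChoice n) (σ : Equiv.Perm (Fin n)) : Module.End ℂ (T N) :=
  ((D σ).map (fun k => (sigma b p k.1 : Module.End ℂ (T N)))).prod

/-- `P = (1/n!) ∑_{σ ∈ S_n} σ̂` (depending on the chosen decompositions `D`). -/
def POp {n : ℕ} (D : DecompChoice n) : Module.End ℂ (T N) :=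
  (n.factorial : ℂ)⁻¹ • ∑ σ : Equiv.Perm (Fin n), Phat b p D σ

/-- `Q` is the operator `𝒫_qsym = lim_{M → ∞} P^M`: on each `T^n` and for every choice
of decompositions, the sequence `P^M u` is eventually equal to `Q u`. -/
def IsPqsym (Q : T N →ₗ[ℂ] T N) : Prop :=
  ∀ (n : ℕ) (D : DecompChoice n), ValidDecomp D →
    ∀ u ∈ Tdeg N n, ∃ N₀ : ℕ, ∀ M ≥ N₀, ((POp b p D) ^ M) u = Q u

/-- The operator `I_r ⊗ Q^k ⊗ I_s` on `T^{r+k+s}`: on a word, apply `Q` to the middle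
`k` tensor factors and the identity to the outer factors. -/
def middleMap (Q : T N →ₗ[ℂ] T N) (r k : ℕ) : T N →ₗ[ℂ] T N :=
  liftWord (fun w =>
    mono (FreeMonoid.ofList ((FreeMonoid.toList w).take r)) *
      Q (mono (FreeMonoid.ofList (((FreeMonoid.toList w).drop r).take k))) *
      mono (FreeMonoid.ofList ((FreeMonoid.toList w).drop (r + k))))

/-- The pairing between `T(V^*)` (realized via the dual basis, hence again as the span
of words) and `T(V)`: a dual-basis word pairs to `1` with the corresponding word of the
same degree, and to `0` with all other words. -/
def pairT (w z : T N) : ℂ :=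
  Finsupp.sum (MonoidAlgebra.coeff w : Word N →₀ ℂ) (fun a c => c * (MonoidAlgebra.coeff z : Word N →₀ ℂ) a)

/-- The quotient relation defining the quadratic algebra `𝒜 = T/I_R = RingQuot (Rel b p)`. -/
inductive Rel (b : Fin N → Fin N → ℂ) (p : Fin N → Fin N → T N) : T N → T N → Prop
  | mk (i j : Fin N) (h : j < i) : Rel b p (X i * X j) (b i j • (X j * X i) + p i j)

/-- The ordered monomial `X_1^{a_1} ⊗ X_2^{a_2} ⊗ ⋯ ⊗ X_N^{a_N}`. -/
def ordMono (a : Fin N → ℕ) : T N := ((List.finRange N).map (fun i => X i ^ a i)).prod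


section Aux

variable {N : ℕ} (b : Fin N → Fin N → ℂ) (p : Fin N → Fin N → T N)

lemma mono_mul (u v : Word N) : mono (N := N) (u * v) = mono u * mono v := by
  simp [mono, MonoidAlgebra.single_mul_single]

lemma mono_mem_Tdeg (w : Word N) : mono w ∈ Tdeg N (wlen w) :=
  Submodule.subset_span ⟨w, rfl, rfl⟩

lemma wlen_mul (u v : Word N) : wlen (u * v) = wlen u + wlen v := by
  simp [wlen, FreeMonoid.toList_mul]

lemma Tdeg_mul {m k : ℕ} {x y : T N} (hx : x ∈ Tdeg N m) (hy : y ∈ Tdeg N k) :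
    x * y ∈ Tdeg N (m + k) := by
  have h := Submodule.mul_mem_mul hx hy
  rw [Tdeg, Tdeg, Submodule.span_mul_span] at h
  refine Submodule.span_le.mpr ?_ h
  rintro z ⟨x', ⟨w, hw, rfl⟩, y', ⟨w', hw', rfl⟩, rfl⟩
  exact Submodule.subset_span ⟨w * w', by rw [wlen_mul, hw, hw'], (mono_mul w w').symm⟩

lemma single_eq_smul_mono (w : Word N) (c : ℂ) :
    (MonoidAlgebra.single w c : T N) = c • mono w := by
  rw [mono, MonoidAlgebra.smul_single', mul_one]

lemma mem_of_forall_mono {S : Submodule ℂ (T N)} (h : ∀ w : Word N, mono w ∈ S) (z : T N) :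
    z ∈ S := by
  induction z using MonoidAlgebra.induction_linear with
  | zero => exact S.zero_mem
  | add f g hf hg => exact S.add_mem hf hg
  | single w c =>
      rw [show (MonoidAlgebra.single w c : T N) = c • mono w from single_eq_smul_mono w c]
      exact S.smul_mem c (h w)

lemma liftWord_single (f : Word N → T N) (w : Word N) (c : ℂ) :
    liftWord f (MonoidAlgebra.single w c) = c • f w := by
  simp only [liftWord, LinearMap.comp_apply, LinearEquiv.coe_coe,
    MonoidAlgebra.coeffLinearEquiv_apply, MonoidAlgebra.coeff_single]
  erw [Finsupp.lsum_single]
  rw [LinearMap.toSpanSingleton_apply]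

lemma sigma_apply_mono (k : ℕ) (w : Word N) :
    sigma b p k (mono w) = sigmaWord b p k w := by
  rw [sigma, mono, liftWord_single, one_smul]

lemma mono_ofList_append (A B : List (Fin N)) :
    mono (N := N) (FreeMonoid.ofList (A ++ B)) =
      mono (FreeMonoid.ofList A) * mono (FreeMonoid.ofList B) := by
  rw [FreeMonoid.ofList_append, mono_mul]

lemma mono_split (A C : List (Fin N)) (x y : Fin N) :
    mono (N := N) (FreeMonoid.ofList (A ++ x :: y :: C)) =
      mono (FreeMonoid.ofList A) * (X x * X y) * mono (FreeMonoid.ofList C) := by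
  have h : A ++ x :: y :: C = A ++ ([x] ++ ([y] ++ C)) := by simp
  rw [h, mono_ofList_append, mono_ofList_append, mono_ofList_append,
    FreeMonoid.ofList_singleton, FreeMonoid.ofList_singleton]
  simp only [mul_assoc]
  rfl

lemma sigma_split (A C : List (Fin N)) (x y : Fin N) :
    sigma b p A.length (mono (FreeMonoid.ofList (A ++ x :: y :: C))) =
      mono (FreeMonoid.ofList A) * Sact b p x y * mono (FreeMonoid.ofList C) := by
  have hlen : (FreeMonoid.toList (FreeMonoid.ofList (A ++ x :: y :: C))).length
      = A.length + (C.length + 2) := by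
    simp only [FreeMonoid.toList_ofList, List.length_append, List.length_cons]
    try omega
  rw [sigma_apply_mono]
  rw [sigmaWord, dif_pos (show A.length + 2 ≤ _ by omega)]
  have h1 : (FreeMonoid.toList (FreeMonoid.ofList (A ++ x :: y :: C))).take A.length = A := by
    rw [FreeMonoid.toList_ofList, List.take_left]
  have h2 : (FreeMonoid.toList (FreeMonoid.ofList (A ++ x :: y :: C))).get
      ⟨A.length, by omega⟩ = x := by
    simp [FreeMonoid.toList_ofList, List.get_eq_getElem, List.getElem_append_right]
  have h3 : (FreeMonoid.toList (FreeMonoid.ofList (A ++ x :: y :: C))).get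
      ⟨A.length + 1, by omega⟩ = y := by
    simp [FreeMonoid.toList_ofList, List.get_eq_getElem, List.getElem_append_right]
  have h4 : (FreeMonoid.toList (FreeMonoid.ofList (A ++ x :: y :: C))).drop (A.length + 2)
      = C := by
    rw [FreeMonoid.toList_ofList]
    have h5 : A ++ x :: y :: C = (A ++ [x, y]) ++ C := by simp
    rw [h5, show A.length + 2 = (A ++ [x, y]).length by simp, List.drop_left]
  rw [h1, h2, h3, h4]

lemma key_split (A C : List (Fin N)) (x y : Fin N) :
    mono (FreeMonoid.ofList (A ++ x :: y :: C)) -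
      sigma b p A.length (mono (FreeMonoid.ofList (A ++ x :: y :: C))) =
      mono (FreeMonoid.ofList A) * (X x * X y - Sact b p x y) *
        mono (FreeMonoid.ofList C) := by
  rw [sigma_split, mono_split, mul_sub, sub_mul]

lemma relGen_eq (i j : Fin N) (h : j < i) :
    X i * X j - Sact b p i j = relGen b p i j := by
  rw [Sact, if_pos h, relGen, sub_add_eq_sub_sub]

lemma sub_Sact_mem (hb : GoodB b) (aT cT : T N) (x y : Fin N) :
    aT * (X x * X y - Sact b p x y) * cT ∈ IR b p := by
  rcases lt_trichotomy x y with hxy | rfl | hyx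
  · have hb' : b y x ≠ 0 := hb y x hxy
    have hS : X x * X y - Sact b p x y = (-(b y x)⁻¹) • relGen b p y x := by
      rw [Sact, if_neg (asymm hxy), if_pos hxy, relGen, neg_smul, smul_sub, smul_sub,
        smul_sub, smul_smul, inv_mul_cancel₀ hb', one_smul]
      abel
    have heq : aT * ((-(b y x)⁻¹) • relGen b p y x) * cT
        = ((-(b y x)⁻¹) • aT) * relGen b p y x * cT := by
      simp only [mul_smul_comm, smul_mul_assoc]
    rw [hS, heq]
    exact Submodule.subset_span ⟨y, x, (-(b y x)⁻¹) • aT, cT, hxy, rfl⟩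
  · rw [Sact, if_neg (lt_irrefl x), if_neg (lt_irrefl x), sub_self, mul_zero, zero_mul]
    exact Submodule.zero_mem _
  · rw [relGen_eq b p x y hyx]
    exact Submodule.subset_span ⟨x, y, aT, cT, hyx, rfl⟩

lemma sub_sigma_mono_mem (hb : GoodB b) (k : ℕ) (w : Word N) :
    mono w - sigma b p k (mono w) ∈ IR b p := by
  by_cases h : k + 2 ≤ (FreeMonoid.toList w).length
  · obtain ⟨A, x, y, C, hw, hk⟩ : ∃ (A : List (Fin N)) (x y : Fin N) (C : List (Fin N)),
        w = FreeMonoid.ofList (A ++ x :: y :: C) ∧ A.length = k := by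
      refine ⟨(FreeMonoid.toList w).take k, (FreeMonoid.toList w)[k]'(by omega),
        (FreeMonoid.toList w)[k + 1]'(by omega), (FreeMonoid.toList w).drop (k + 2), ?_, ?_⟩
      · conv_lhs => rw [← FreeMonoid.ofList_toList w]
        congr 1
        have h1 := List.take_append_drop k (FreeMonoid.toList w)
        rw [List.drop_eq_getElem_cons (show k < _ by omega),
          List.drop_eq_getElem_cons (show k + 1 < _ by omega)] at h1
        exact h1.symm
      · rw [List.length_take]; omega
    subst hw
    subst hk
    rw [key_split]
    exact sub_Sact_mem b p hb _ _ _ _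
  · rw [sigma_apply_mono, sigmaWord, dif_neg h, sub_self]
    exact Submodule.zero_mem _

lemma sub_sigma_mem (hb : GoodB b) (k : ℕ) (z : T N) :
    z - sigma b p k z ∈ IR b p := by
  have hmem := mem_of_forall_mono
    (S := Submodule.comap (LinearMap.id - sigma b p k) (IR b p))
    (fun w => by
      rw [Submodule.mem_comap, LinearMap.sub_apply, LinearMap.id_apply]
      exact sub_sigma_mono_mem b p hb k w) z
  rwa [Submodule.mem_comap, LinearMap.sub_apply, LinearMap.id_apply] at hmem

/-- The operator associated to a list of positions. -/
def PhatL (n : ℕ) (L : List {k : ℕ // k + 2 ≤ n}) : Module.End ℂ (T N) :=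
  (L.map (fun k => (sigma b p k.1 : Module.End ℂ (T N)))).prod

lemma Phat_eq_PhatL {n : ℕ} (D : DecompChoice n) (σ : Equiv.Perm (Fin n)) :
    Phat b p D σ = PhatL b p n (D σ) := rfl

lemma PhatL_append {n : ℕ} (L L' : List {k : ℕ // k + 2 ≤ n}) :
    PhatL b p n (L ++ L') = PhatL b p n L * PhatL b p n L' := by
  simp only [PhatL, List.map_append, List.prod_append]

lemma sub_PhatL_mem (hb : GoodB b) {n : ℕ} (L : List {k : ℕ // k + 2 ≤ n}) (z : T N) :
    z - PhatL b p n L z ∈ IR b p := by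
  induction L generalizing z with
  | nil =>
      simp only [PhatL, List.map_nil, List.prod_nil, Module.End.one_apply, sub_self]
      exact Submodule.zero_mem _
  | cons k L ih =>
      have hcons : PhatL b p n (k :: L)
          = (sigma b p k.1 : Module.End ℂ (T N)) * PhatL b p n L := by
        simp only [PhatL, List.map_cons, List.prod_cons]
      rw [hcons, Module.End.mul_apply,
        show z - sigma b p k.1 ((PhatL b p n L) z)
          = (z - PhatL b p n L z) + (PhatL b p n L z - sigma b p k.1 (PhatL b p n L z))
          by abel]
      exact Submodule.add_mem _ (ih z) (sub_sigma_mem b p hb _ _)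

lemma sub_POp_mem (hb : GoodB b) {n : ℕ} (D : DecompChoice n) (z : T N) :
    z - POp b p D z ∈ IR b p := by
  have hfac : ((n.factorial : ℂ)) ≠ 0 := by
    exact_mod_cast Nat.factorial_ne_zero n
  have hsum : z - POp b p D z
      = (n.factorial : ℂ)⁻¹ • ∑ σ : Equiv.Perm (Fin n), (z - Phat b p D σ z) := by
    rw [Finset.sum_sub_distrib, Finset.sum_const, Finset.card_univ, Fintype.card_perm,
      Fintype.card_fin, smul_sub, ← Nat.cast_smul_eq_nsmul ℂ, smul_smul,
      inv_mul_cancel₀ hfac, one_smul, POp, LinearMap.smul_apply, LinearMap.sum_apply]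
  rw [hsum]
  refine Submodule.smul_mem _ _ (Submodule.sum_mem _ (fun σ _ => ?_))
  exact sub_PhatL_mem b p hb (D σ) z

lemma sub_POpPow_mem (hb : GoodB b) {n : ℕ} (D : DecompChoice n) (M : ℕ) (z : T N) :
    z - (POp b p D ^ M) z ∈ IR b p := by
  induction M generalizing z with
  | zero => rw [pow_zero, Module.End.one_apply, sub_self]; exact Submodule.zero_mem _
  | succ M ih =>
      rw [pow_succ, Module.End.mul_apply]
      rw [show z - (POp b p D ^ M) (POp b p D z)
        = (z - POp b p D z) + (POp b p D z - (POp b p D ^ M) (POp b p D z)) by abel]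
      exact Submodule.add_mem _ (sub_POp_mem b p hb D z) (ih _)

lemma XmulX_mem_Tdeg2 (u v : Fin N) : X u * X v ∈ Tdeg N 2 := by
  have h : X u * X v = mono (FreeMonoid.of u * FreeMonoid.of v : Word N) := by
    rw [mono_mul]; rfl
  have h2 : wlen (FreeMonoid.of u * FreeMonoid.of v : Word N) = 2 := by
    simp [wlen, FreeMonoid.toList_mul]
  rw [h, ← h2]
  exact mono_mem_Tdeg _

lemma Sact_mem_Tdeg2 (hp : GoodP p) (x y : Fin N) : Sact b p x y ∈ Tdeg N 2 := by
  have hspan : ∀ i j : Fin N, j < i → p i j ∈ Tdeg N 2 := by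
    intro i j hji
    refine Submodule.span_le.mpr ?_ (hp i j hji)
    rintro z ⟨k, l, _, _, rfl⟩
    exact XmulX_mem_Tdeg2 k l
  rw [Sact]
  split_ifs with h1 h2
  · exact Submodule.add_mem _ (Submodule.smul_mem _ _ (XmulX_mem_Tdeg2 y x)) (hspan x y h1)
  · exact Submodule.smul_mem _ _ (Submodule.sub_mem _ (XmulX_mem_Tdeg2 y x) (hspan y x h2))
  · exact XmulX_mem_Tdeg2 x y

lemma sigma_mem_Tdeg (hp : GoodP p) (k : ℕ) {n : ℕ} {x : T N} (hx : x ∈ Tdeg N n) :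
    sigma b p k x ∈ Tdeg N n := by
  induction hx using Submodule.span_induction with
  | mem z hz =>
      obtain ⟨w, hw, rfl⟩ := hz
      rw [sigma_apply_mono, sigmaWord]
      by_cases h : k + 2 ≤ (FreeMonoid.toList w).length
      · rw [dif_pos h]
        have h1 := Tdeg_mul (Tdeg_mul (mono_mem_Tdeg (N := N)
            (FreeMonoid.ofList ((FreeMonoid.toList w).take k)))
            (Sact_mem_Tdeg2 b p hp ((FreeMonoid.toList w).get ⟨k, by omega⟩)
              ((FreeMonoid.toList w).get ⟨k + 1, by omega⟩)))
            (mono_mem_Tdeg (N := N) (FreeMonoid.ofList ((FreeMonoid.toList w).drop (k + 2))))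
        have hlen : (FreeMonoid.toList w).length = n := hw
        have heq : wlen (FreeMonoid.ofList ((FreeMonoid.toList w).take k) : Word N) + 2 +
            wlen (FreeMonoid.ofList ((FreeMonoid.toList w).drop (k + 2)) : Word N) = n := by
          simp only [wlen, FreeMonoid.toList_ofList, List.length_take, List.length_drop]
          omega
        rwa [heq] at h1
      · rw [dif_neg h, ← hw]
        exact mono_mem_Tdeg w
  | zero => rw [map_zero]; exact Submodule.zero_mem _
  | add u v _ _ hu hv => rw [map_add]; exact Submodule.add_mem _ hu hv
  | smul c u _ hu => rw [map_smul]; exact Submodule.smul_mem _ _ hu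

lemma PhatL_mem_Tdeg (hp : GoodP p) {n m : ℕ} (L : List {k : ℕ // k + 2 ≤ m}) {x : T N}
    (hx : x ∈ Tdeg N n) : PhatL b p m L x ∈ Tdeg N n := by
  induction L generalizing x with
  | nil => simpa only [PhatL, List.map_nil, List.prod_nil, Module.End.one_apply] using hx
  | cons k L ih =>
      simp only [PhatL, List.map_cons, List.prod_cons, Module.End.mul_apply]
      exact sigma_mem_Tdeg b p hp k.1 (ih hx)

lemma POp_mem_Tdeg (hp : GoodP p) {n m : ℕ} (D : DecompChoice m) {x : T N}
    (hx : x ∈ Tdeg N n) : POp b p D x ∈ Tdeg N n := by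
  rw [POp, LinearMap.smul_apply, LinearMap.sum_apply]
  exact Submodule.smul_mem _ _ (Submodule.sum_mem _
    (fun σ _ => PhatL_mem_Tdeg b p hp (D σ) hx))

lemma swapAdj_exists {n : ℕ} (σ : Equiv.Perm (Fin n)) :
    ∃ L : List {k : ℕ // k + 2 ≤ n}, (L.map (swapAdj n)).prod = σ := by
  have hadj : ∀ (a c : Fin n), a.1 + 1 = c.1 →
      Equiv.swap a c ∈ Subgroup.closure (Set.range (swapAdj n)) := by
    intro a c hac
    have h2n : a.1 + 2 ≤ n := by have := c.2; omega
    have heq : Equiv.swap a c = swapAdj n ⟨a.1, h2n⟩ := by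
      rw [swapAdj]
      exact congrArg₂ Equiv.swap (Fin.ext rfl) (Fin.ext hac.symm)
    rw [heq]
    exact Subgroup.subset_closure ⟨_, rfl⟩
  have hswap : ∀ (d : ℕ) (a c : Fin n), a.1 < c.1 → c.1 - a.1 ≤ d →
      Equiv.swap a c ∈ Subgroup.closure (Set.range (swapAdj n)) := by
    intro d
    induction d with
    | zero => intro a c h1 h2; omega
    | succ d ih =>
        intro a c h1 h2
        by_cases hd : a.1 + 1 = c.1
        · exact hadj a c hd
        · have hcpos : 1 ≤ c.1 := by omega
          set e : Fin n := ⟨c.1 - 1, by omega⟩ with he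
          have hae : a.1 < e.1 := by rw [he]; simp; omega
          have hec : e.1 + 1 = c.1 := by rw [he]; simp; omega
          have hne1 : a ≠ e := fun hcon => by rw [hcon] at hae; omega
          have hne2 : a ≠ c := fun hcon => by rw [hcon] at h1; omega
          have hkey : Equiv.swap e c * Equiv.swap a e * Equiv.swap e c = Equiv.swap c a :=
            Equiv.swap_mul_swap_mul_swap hne1 hne2
          have heq2 : Equiv.swap a c = Equiv.swap e c * Equiv.swap a e * Equiv.swap e c := by
            rw [hkey, Equiv.swap_comm]
          rw [heq2]
          exact Subgroup.mul_mem _ (Subgroup.mul_mem _ (hadj e c hec)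
            (ih a e hae (by omega))) (hadj e c hec)
  have htop : Subgroup.closure (Set.range (swapAdj n)) = ⊤ := by
    rw [eq_top_iff, ← Equiv.Perm.closure_isSwap]
    refine (Subgroup.closure_le _).mpr ?_
    rintro τ ⟨a, c, hne, rfl⟩
    rcases lt_trichotomy a.1 c.1 with h | h | h
    · exact hswap (c.1 - a.1) a c h le_rfl
    · exact absurd (Fin.ext h) hne
    · rw [Equiv.swap_comm]
      exact hswap (a.1 - c.1) c a h le_rfl
  have hmem : σ ∈ Submonoid.closure
      (Set.range (swapAdj n) ∪ (Set.range (swapAdj n))⁻¹) := by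
    have h1 : σ ∈ (Subgroup.closure (Set.range (swapAdj n))).toSubmonoid := by
      rw [Subgroup.mem_toSubmonoid, htop]; trivial
    rwa [Subgroup.closure_toSubmonoid] at h1
  obtain ⟨l, hl, hprod⟩ := Submonoid.exists_list_of_mem_closure hmem
  suffices h : ∀ l' : List (Equiv.Perm (Fin n)),
      (∀ y ∈ l', y ∈ Set.range (swapAdj n) ∪ (Set.range (swapAdj n))⁻¹) →
      ∃ L : List {k : ℕ // k + 2 ≤ n}, (L.map (swapAdj n)).prod = l'.prod by
    obtain ⟨L, hL⟩ := h l hl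
    exact ⟨L, by rw [hL, hprod]⟩
  intro l'
  induction l' with
  | nil => intro _; exact ⟨[], by simp⟩
  | cons g l'' ih =>
      intro hmem'
      obtain ⟨L', hL'⟩ := ih (fun y hy => hmem' y (List.mem_cons_of_mem g hy))
      have hg : g ∈ Set.range (swapAdj n) := by
        rcases hmem' g (List.mem_cons_self) with h | h
        · exact h
        · obtain ⟨k, hk⟩ := h
          refine ⟨k, ?_⟩
          rw [← inv_inv g, ← hk]
          simp [swapAdj, Equiv.swap_inv]
      obtain ⟨k, hk⟩ := hg
      exact ⟨k :: L', by rw [List.map_cons, List.prod_cons, hk, hL', List.prod_cons]⟩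

/-- Canonical choice of decompositions. -/
noncomputable def D0 (n : ℕ) : DecompChoice n := fun σ => (swapAdj_exists σ).choose

lemma D0_valid (n : ℕ) : ValidDecomp (D0 n) := fun σ => (swapAdj_exists σ).choose_spec

lemma Q_POp (hp : GoodP p) (Q : T N →ₗ[ℂ] T N) (hQ : IsPqsym b p Q) {n : ℕ}
    (D : DecompChoice n) (hD : ValidDecomp D) {x : T N} (hx : x ∈ Tdeg N n) :
    Q (POp b p D x) = Q x := by
  obtain ⟨N₀, h₀⟩ := hQ n D hD x hx
  obtain ⟨N₁, h₁⟩ := hQ n D hD (POp b p D x) (POp_mem_Tdeg b p hp D hx)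
  have hM := h₁ (max N₀ N₁) (le_max_right _ _)
  have hM' := h₀ (max N₀ N₁ + 1) (le_trans (le_max_left _ _) (Nat.le_succ _))
  rw [← hM, ← hM', pow_succ, Module.End.mul_apply]

lemma Q_PhatL (hp : GoodP p) (Q : T N →ₗ[ℂ] T N) (hQ : IsPqsym b p Q) {n : ℕ}
    (L : List {k : ℕ // k + 2 ≤ n}) {x : T N} (hx : x ∈ Tdeg N n) :
    Q (PhatL b p n L x) = Q x := by
  set τ := (L.map (swapAdj n)).prod with hτ
  set D' : DecompChoice n := fun σ => D0 n (σ * τ⁻¹) ++ L with hD'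
  have hD'valid : ValidDecomp D' := by
    intro σ
    simp only [hD', List.map_append, List.prod_append]
    rw [D0_valid n (σ * τ⁻¹), ← hτ, inv_mul_cancel_right]
  have hPD' : POp b p D' = POp b p (D0 n) * PhatL b p n L := by
    rw [POp, POp, smul_mul_assoc]
    congr 1
    rw [Finset.sum_mul]
    have hterm : ∀ σ : Equiv.Perm (Fin n),
        Phat b p D' σ = Phat b p (D0 n) (σ * τ⁻¹) * PhatL b p n L := by
      intro σ
      show PhatL b p n (D0 n (σ * τ⁻¹) ++ L) = _
      rw [PhatL_append]; rfl
    simp only [hterm]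
    exact Equiv.sum_comp (Equiv.mulRight τ⁻¹)
      (fun σ => Phat b p (D0 n) σ * PhatL b p n L)
  have h1 : Q (POp b p D' x) = Q x := Q_POp b p hp Q hQ D' hD'valid hx
  have h2 : Q (POp b p (D0 n) (PhatL b p n L x)) = Q (PhatL b p n L x) :=
    Q_POp b p hp Q hQ (D0 n) (D0_valid n) (PhatL_mem_Tdeg b p hp L hx)
  rw [hPD', Module.End.mul_apply, h2] at h1
  exact h1

lemma Q_sigma_mono (hp : GoodP p) (Q : T N →ₗ[ℂ] T N) (hQ : IsPqsym b p Q) (k : ℕ)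
    (w : Word N) : Q (sigma b p k (mono w)) = Q (mono w) := by
  by_cases h : k + 2 ≤ wlen w
  · have hL : PhatL b p (wlen w) [⟨k, h⟩] = (sigma b p k : Module.End ℂ (T N)) := by
      simp only [PhatL, List.map_cons, List.map_nil, List.prod_cons, List.prod_nil, mul_one]
    have hh := Q_PhatL b p hp Q hQ [⟨k, h⟩] (mono_mem_Tdeg w)
    rwa [hL] at hh
  · rw [sigma_apply_mono, sigmaWord,
      dif_neg (show ¬(k + 2 ≤ (FreeMonoid.toList w).length) from h)]

lemma Q_sigma (hp : GoodP p) (Q : T N →ₗ[ℂ] T N) (hQ : IsPqsym b p Q) (k : ℕ) (z : T N) :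
    Q (sigma b p k z) = Q z := by
  have hmem := mem_of_forall_mono
    (S := LinearMap.ker ((Q ∘ₗ sigma b p k) - Q))
    (fun w => by
      rw [LinearMap.mem_ker, LinearMap.sub_apply, LinearMap.comp_apply, sub_eq_zero]
      exact Q_sigma_mono b p hp Q hQ k w) z
  rwa [LinearMap.mem_ker, LinearMap.sub_apply, LinearMap.comp_apply, sub_eq_zero] at hmem

lemma Q_IR (hp : GoodP p) (Q : T N →ₗ[ℂ] T N) (hQ : IsPqsym b p Q) {v : T N}
    (hv : v ∈ IR b p) : Q v = 0 := by
  induction hv using Submodule.span_induction with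
  | mem z hz =>
      obtain ⟨i, j, a, c, hji, rfl⟩ := hz
      have hword : ∀ wa wc : Word N, Q (mono wa * relGen b p i j * mono wc) = 0 := by
        intro wa wc
        have hkey := key_split b p (FreeMonoid.toList wa) (FreeMonoid.toList wc) i j
        rw [FreeMonoid.ofList_toList, FreeMonoid.ofList_toList,
          relGen_eq b p i j hji] at hkey
        rw [← hkey, map_sub, Q_sigma b p hp Q hQ, sub_self]
      have hc : ∀ (wa : Word N) (c' : T N), Q (mono wa * relGen b p i j * c') = 0 := by
        intro wa c'
        have hmem := mem_of_forall_mono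
          (S := LinearMap.ker (Q ∘ₗ LinearMap.mulLeft ℂ (mono wa * relGen b p i j)))
          (fun wc => by
            rw [LinearMap.mem_ker, LinearMap.comp_apply, LinearMap.mulLeft_apply]
            exact hword wa wc) c'
        rwa [LinearMap.mem_ker, LinearMap.comp_apply, LinearMap.mulLeft_apply] at hmem
      have hfin := mem_of_forall_mono
        (S := LinearMap.ker (Q ∘ₗ LinearMap.mulRight ℂ (relGen b p i j * c)))
        (fun wa => by
          rw [LinearMap.mem_ker, LinearMap.comp_apply, LinearMap.mulRight_apply,
            ← mul_assoc]
          exact hc wa c) a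
      rwa [LinearMap.mem_ker, LinearMap.comp_apply, LinearMap.mulRight_apply,
        ← mul_assoc] at hfin
  | zero => rw [map_zero]
  | add u v _ _ hu hv => rw [map_add, hu, hv, add_zero]
  | smul c u _ hu => rw [map_smul, hu, smul_zero]

lemma sub_Q_mem (hb : GoodB b) (Q : T N →ₗ[ℂ] T N) (hQ : IsPqsym b p Q) (x : T N) :
    x - Q x ∈ IR b p := by
  have hw : ∀ w : Word N, mono w - Q (mono w) ∈ IR b p := by
    intro w
    obtain ⟨N₀, h₀⟩ := hQ (wlen w) (D0 (wlen w)) (D0_valid (wlen w)) (mono w)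
      (mono_mem_Tdeg w)
    rw [← h₀ N₀ le_rfl]
    exact sub_POpPow_mem b p hb (D0 (wlen w)) N₀ (mono w)
  have hmem := mem_of_forall_mono (S := Submodule.comap (LinearMap.id - Q) (IR b p))
    (fun w => by
      rw [Submodule.mem_comap, LinearMap.sub_apply, LinearMap.id_apply]
      exact hw w) x
  rwa [Submodule.mem_comap, LinearMap.sub_apply, LinearMap.id_apply] at hmem

lemma IR_mul_right {v : T N} (hv : v ∈ IR b p) (u : T N) : v * u ∈ IR b p := by
  induction hv using Submodule.span_induction with
  | mem z hz =>
      obtain ⟨i, j, a, c, hji, rfl⟩ := hz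
      rw [mul_assoc]
      exact Submodule.subset_span ⟨i, j, a, c * u, hji, by rw [mul_assoc]⟩
  | zero => rw [zero_mul]; exact Submodule.zero_mem _
  | add x y _ _ hx hy => rw [add_mul]; exact Submodule.add_mem _ hx hy
  | smul c x _ hx => rw [smul_mul_assoc]; exact Submodule.smul_mem _ _ hx

end Aux

/-- under (EA), if `𝒫_qsym(u₁) = 0` then `𝒫_qsym(u₁ ⊗ u) = 0` for all
`u ∈ T`. -/
theorem statement16 {N : ℕ} (b : Fin N → Fin N → ℂ) (p : Fin N → Fin N → T N)
    (hb : GoodB b) (hp : GoodP p) (hEA : EA b p) :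
    ∀ Q : T N →ₗ[ℂ] T N, IsPqsym b p Q →
      ∀ u₁ : T N, Q u₁ = 0 → ∀ u : T N, Q (u₁ * u) = 0 := by
  intro Q hQ u₁ h1 u
  have hu₁ : u₁ ∈ IR b p := by
    have h := sub_Q_mem b p hb Q hQ u₁
    rwa [h1, sub_zero] at h
  exact Q_IR b p hp Q hQ (IR_mul_right b p hu₁ u)

end QDiff
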